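/- For any state property system and any a ∈ L, the Cartan image κ(a) = {p ∈ Σ : a ∈ ξ(p)} is closed under superposition, i.e. κ(a) ∈ F(Σ); moreover, under (A), κ restricts to an isomorphism of complete atomistic lattices between κ(L) and F(Σ), with κ(a) a singleton whenever a is an atom. -/
import Mathlib


universe u v

/-- A state property system: states, a complete lattice of properties, and
the actuality map `xi` assigning to each state the set of actual properties. -/
structure SPS (σ : Type u) (L : Type v) [CompleteLattice L] where
  xi : σ → Set L
  top_mem : ∀ p, ⊤ ∈ xi p
  bot_not_mem : ∀ p, ⊥ ∉ xi p
  sInf_mem : ∀ (p : σ) (A : Set L), (∀ a ∈ A, a ∈ xi p) ↔ sInf A ∈ xi p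
  le_iff : ∀ a b : L, a ≤ b ↔ ∀ r, a ∈ xi r → b ∈ xi r

variable {σ : Type u} {L : Type v} [CompleteLattice L]

/-- λ{p,q} : the set of superpositions of the pair p, q. -/
def SPS.lamPair (S : SPS σ L) (p q : σ) : Set σ := {s | S.xi p ∩ S.xi q ⊆ S.xi s}

/-- A set is λ-closed if it contains λ{p,q} for each pair of its points. -/
def SPS.lamClosed (S : SPS σ L) (T : Set σ) : Prop :=
  ∀ p ∈ T, ∀ q ∈ T, S.lamPair p q ⊆ T

/-- λ(P) : the intersection of all λ-closed sets containing P. -/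
def SPS.lam (S : SPS σ L) (P : Set σ) : Set σ :=
  ⋂₀ {G | S.lamClosed G ∧ P ⊆ G}

/-- The set of superpositions of a set of states. -/
def SPS.bar (S : SPS σ L) (T : Set σ) : Set σ :=
  {p | (⋂ s ∈ T, S.xi s) ⊆ S.xi p}

/-- Property (A): at least two states and `xi` order-reflecting (injective). -/
def SPS.propA (S : SPS σ L) : Prop :=
  (∃ p q : σ, p ≠ q) ∧ ∀ p q : σ, S.xi p ⊆ S.xi q → p = q

/-- p is a minimal superposition of A. -/
def SPS.minSup (S : SPS σ L) (A : Set σ) (p : σ) : Prop :=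
  p ∈ S.bar A ∧ ∀ Q : Set σ, Q ⊂ A → p ∉ S.bar Q

/-- The minimal superposition principle for a given set A. -/
def SPS.MSPon (S : SPS σ L) (A : Set σ) : Prop :=
  ∀ p : σ, S.minSup A p →
    ∀ S₁ S₂ : Set σ, S₁ ⊂ A → S₂ ⊂ A → S₁ ∩ S₂ = ∅ → S₁ ∪ S₂ = A →
      (S.bar (S₁ ∪ {p}) ∩ S.bar S₂).Nonempty

/-- n-MSP : MSP for all sets of cardinality at most n. -/
def SPS.nMSP (S : SPS σ L) (n : ℕ) : Prop :=
  ∀ A : Set σ, A.Finite → A.ncard ≤ n → S.MSPon A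

/-- f-MSP : MSP for all finite sets. -/
def SPS.fMSP (S : SPS σ L) : Prop := ∀ A : Set σ, A.Finite → S.MSPon A

/-- The Cartan map. -/
def SPS.kappa (S : SPS σ L) (a : L) : Set σ := {p | a ∈ S.xi p}

theorem stmt16 (S : SPS σ L) :
    -- κ(a) is closed under superpositions
    (∀ a : L, S.bar (S.kappa a) = S.kappa a) ∧
    (S.propA →
      -- κ(L) and F(Σ) are isomorphic as complete (atomistic) lattices
      Nonempty ((Set.range S.kappa : Set (Set σ)) ≃o
        ({T : Set σ | S.bar T = T} : Set (Set σ))) ∧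
      -- κ of an atom is a singleton
      (∀ a : L, IsAtom a → ∃ p : σ, S.kappa a = {p})) := by

  have hbar : ∀ a : L, S.bar (S.kappa a) = S.kappa a := by
    intro a
    ext p
    constructor
    · intro hp
      exact hp (Set.mem_iInter₂.mpr fun s hs => hs)
    · intro hp b hb
      exact Set.mem_iInter₂.mp hb p hp
  refine ⟨hbar, fun hA => ⟨?_, ?_⟩⟩
  · have hrange : Set.range S.kappa = {T : Set σ | S.bar T = T} := by
      ext T
      constructor
      · rintro ⟨a, rfl⟩
        exact hbar a
      · intro hT
        refine ⟨sInf (⋂ s ∈ T, S.xi s), ?_⟩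
        ext p
        constructor
        · intro hp
          have : ∀ b ∈ (⋂ s ∈ T, S.xi s), b ∈ S.xi p :=
            (S.sInf_mem p _).2 hp
          have : p ∈ S.bar T := fun b hb => this b hb
          rwa [hT] at this
        · intro hp
          refine (S.sInf_mem p _).1 fun b hb => ?_
          have hpT : p ∈ S.bar T := by rw [hT]; exact hp
          exact hpT hb
    exact ⟨OrderIso.setCongr _ _ hrange⟩
  · intro a ha
    -- κ a is nonempty
    have hne : ∃ p, a ∈ S.xi p := by
      by_contra h
      push_neg at h
      have : a ≤ (⊥ : L) := (S.le_iff a ⊥).2 fun r hr => absurd hr (h r)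
      exact ha.1 (le_bot_iff.mp this)
    obtain ⟨p, hp⟩ := hne
    have key : ∀ q, a ∈ S.xi q → sInf (S.xi q) = a := by
      intro q hq
      have h1 : sInf (S.xi q) ∈ S.xi q := (S.sInf_mem q _).1 fun b hb => hb
      have h2 : sInf (S.xi q) ≤ a := sInf_le hq
      have h3 : sInf (S.xi q) ≠ ⊥ := fun h => S.bot_not_mem q (h ▸ h1)
      rcases lt_or_eq_of_le h2 with h | h
      · exact absurd (ha.2 _ h) h3
      · exact h
    refine ⟨p, ?_⟩
    ext q
    simp only [SPS.kappa, Set.mem_setOf_eq, Set.mem_singleton_iff]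
    constructor
    · intro hq
      refine hA.2 q p fun b hb => ?_
      have : a ≤ b := key q hq ▸ sInf_le hb
      have hap : a ∈ S.xi p := hp
      exact (S.le_iff a b).1 this p hap
    · rintro rfl
      exact hp
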